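/- Let q, u be indeterminates and set [x]_{q,u} = (q^x u − q^{-x})/(q − q^{-1}), [m]_q = (q^m − q^{-m})/(q − q^{-1}), with Gaussian q-binomials binom_q. On the ℚ(q,u)-vector space with basis (z_i ⊗ z_j)_{i,j≥0}, define R(u)(z_i⊗z_j) = Σ_{ν=0}^{i} u^{-i} (q − q^{-1})^{i−ν} q^{(i−ν)(i−2j+3ν−1)/2} binom_q(i+j−ν, j) (Π_{s=ν−i+1}^{0} [s]_{q,u}) · z_{ν} ⊗ z_{i+j−ν}. Define the operators E = e⊗1 + k⊗e and K = k⊗k, where e z_j = z_{j−1} (z_{−1} = 0) and k z_j = q^{-2j} z_j. Then R(u) ∘ E = E ∘ R(u) and R(u) ∘ K = K ∘ R(u). -/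

import Mathlib

/-- The field `ℚ(q, u)`, realized as `ℚ(q)(u)`. -/
abbrev Stmt15K : Type := RatFunc (RatFunc ℚ)

/-- The indeterminate `q` in `ℚ(q,u)`. -/
noncomputable def stmt15q : Stmt15K := RatFunc.C RatFunc.X

/-- The indeterminate `u` in `ℚ(q,u)`. -/
noncomputable def stmt15u : Stmt15K := RatFunc.X

/-- `[x]_{q,u} = (q^x u - q^{-x})/(q - q^{-1})` for `x ∈ ℤ`. -/
noncomputable def stmt15bqu (x : ℤ) : Stmt15K :=
  (stmt15q ^ x * stmt15u - stmt15q ^ (-x)) / (stmt15q - stmt15q⁻¹)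

/-- The quantum integer `[m]_q`. -/
noncomputable def stmt15qnum (m : ℕ) : Stmt15K :=
  (stmt15q ^ m - stmt15q⁻¹ ^ m) / (stmt15q - stmt15q⁻¹)

/-- The quantum factorial `[m]_q!`. -/
noncomputable def stmt15qfact : ℕ → Stmt15K
  | 0 => 1
  | n + 1 => stmt15qfact n * stmt15qnum (n + 1)

/-- The Gaussian `q`-binomial coefficient. -/
noncomputable def stmt15qbinom (m p : ℕ) : Stmt15K :=
  stmt15qfact m / (stmt15qfact p * stmt15qfact (m - p))

/-- Basis vector `z_i ⊗ z_j`. -/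
noncomputable def stmt15zb (p : ℕ × ℕ) : (ℕ × ℕ) →₀ Stmt15K := Finsupp.single p 1

namespace S15
open Finset

noncomputable def Cq : RatFunc ℚ →+* Stmt15K := RatFunc.C

lemma X_ne_C (r : RatFunc ℚ) : (RatFunc.X : Stmt15K) ≠ Cq r := by
  intro h
  have h2 : algebraMap (Polynomial (RatFunc ℚ)) (RatFunc (RatFunc ℚ)) Polynomial.X
      = algebraMap _ _ (Polynomial.C r) := by
    rw [RatFunc.algebraMap_X, RatFunc.algebraMap_C]; exact h
  exact Polynomial.X_ne_C r (IsFractionRing.injective _ _ h2)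

lemma X_pow_ne_one (k : ℕ) (hk : k ≠ 0) : (RatFunc.X : RatFunc ℚ)^k ≠ 1 := by
  intro h
  have h2 : algebraMap (Polynomial ℚ) (RatFunc ℚ) (Polynomial.X^k)
      = algebraMap _ _ 1 := by
    simpa [map_pow, RatFunc.algebraMap_X] using h
  have h3 := IsFractionRing.injective (Polynomial ℚ) (RatFunc ℚ) h2
  have h4 := congrArg (fun p => Polynomial.coeff p 0) h3
  simp [Polynomial.coeff_X_pow, hk] at h4
  omega

lemma Cq_inj : Function.Injective Cq := RingHom.injective Cq

lemma q_eq : stmt15q = Cq RatFunc.X := rfl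

lemma hq : stmt15q ≠ 0 := by
  rw [q_eq]
  intro h
  exact RatFunc.X_ne_zero (Cq_inj (by rw [h, map_zero]))

lemma hu : stmt15u ≠ 0 := RatFunc.X_ne_zero

lemma q_zpow_C (z : ℤ) : stmt15q ^ z = Cq (RatFunc.X ^ z) := by
  rw [q_eq, ← map_zpow₀]

lemma q_inv_C : stmt15q⁻¹ = Cq (RatFunc.X⁻¹) := by
  rw [q_eq, ← map_inv₀]

lemma q_pow_C (n : ℕ) : stmt15q ^ n = Cq (RatFunc.X ^ n) := by
  rw [q_eq, ← map_pow]

lemma hd : stmt15q - stmt15q⁻¹ ≠ 0 := by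
  rw [q_inv_C, q_eq, ← map_sub]
  intro h
  have h2 : (RatFunc.X : RatFunc ℚ) - RatFunc.X⁻¹ = 0 := Cq_inj (by rw [h, map_zero])
  have h3 : (RatFunc.X : RatFunc ℚ) ^ 2 = 1 := by
    have h4 := sub_eq_zero.mp h2
    have hX : (RatFunc.X : RatFunc ℚ) ≠ 0 := RatFunc.X_ne_zero
    rw [pow_two]; nth_rewrite 2 [h4]; exact mul_inv_cancel₀ hX
  exact X_pow_ne_one 2 (by norm_num) h3

lemma qnum_ne_zero (m : ℕ) (hm : m ≠ 0) : stmt15qnum m ≠ 0 := by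
  rw [stmt15qnum]
  apply div_ne_zero _ hd
  rw [q_inv_C, q_eq, ← map_pow, ← map_pow, ← map_sub]
  intro h
  have h2 : (RatFunc.X : RatFunc ℚ)^m - RatFunc.X⁻¹^m = 0 := Cq_inj (by rw [h, map_zero])
  have h3 : (RatFunc.X : RatFunc ℚ)^(2*m) = 1 := by
    have h4 := sub_eq_zero.mp h2
    have hX : (RatFunc.X : RatFunc ℚ) ≠ 0 := RatFunc.X_ne_zero
    rw [inv_pow] at h4
    rw [two_mul, pow_add]; nth_rewrite 2 [h4]; exact mul_inv_cancel₀ (pow_ne_zero _ hX)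
  exact X_pow_ne_one (2*m) (by omega) h3

lemma qfact_ne_zero (m : ℕ) : stmt15qfact m ≠ 0 := by
  induction m with
  | zero => simp [stmt15qfact]
  | succ n ih =>
    rw [stmt15qfact]
    exact mul_ne_zero ih (qnum_ne_zero _ (by omega))

lemma qnum_num_ne_zero (m : ℕ) (hm : m ≠ 0) : stmt15q ^ m - stmt15q⁻¹ ^ m ≠ 0 := by
  have := qnum_ne_zero m hm
  rw [stmt15qnum] at this
  exact fun h => this (by rw [h, zero_div])

lemma qq_pow_ne_one (m : ℕ) (hm : m ≠ 0) : stmt15q ^ m * stmt15q ^ m - 1 ≠ 0 := by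
  have h1 := qnum_num_ne_zero m hm
  have h2 : stmt15q ^ m * (stmt15q ^ m - stmt15q⁻¹ ^ m) = stmt15q ^ m * stmt15q ^ m - 1 := by
    rw [mul_sub, ← mul_pow stmt15q stmt15q⁻¹, mul_inv_cancel₀ hq, one_pow]
  rw [← h2]
  exact mul_ne_zero (pow_ne_zero _ hq) h1

lemma qq_ne_one : stmt15q * stmt15q - 1 ≠ 0 := by
  have := qq_pow_ne_one 1 one_ne_zero
  simpa using this

noncomputable def bn (x : ℤ) : Stmt15K := stmt15q ^ x * stmt15u - stmt15q ^ (-x)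

lemma bn_ne_zero (x : ℤ) : bn x ≠ 0 := by
  rw [bn]
  intro h
  have hz : stmt15q ^ x ≠ 0 := zpow_ne_zero _ hq
  have h2 : stmt15u = (stmt15q ^ x)⁻¹ * stmt15q ^ (-x) := by
    rw [← sub_eq_zero.mp h, inv_mul_cancel_left₀ hz]
  rw [q_zpow_C, q_zpow_C, ← map_inv₀, ← map_mul] at h2
  exact X_ne_C _ h2

noncomputable def Qn (n : ℕ) : Stmt15K := ∏ s ∈ Finset.range n, bn (-(s:ℤ))

lemma Qn_ne_zero (n : ℕ) : Qn n ≠ 0 :=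
  Finset.prod_ne_zero_iff.mpr (fun _ _ => bn_ne_zero _)

lemma Qn_succ (n : ℕ) : Qn (n+1) = Qn n * bn (-(n:ℤ)) := Finset.prod_range_succ _ _

def En (n j ν : ℕ) : ℤ := ((n:ℤ) * ((n:ℤ) + 4*(ν:ℤ) - 2*(j:ℤ) - 1)) / 2

lemma En_even (n j ν : ℕ) :
    2 * En n j ν = (n:ℤ) * ((n:ℤ) + 4*(ν:ℤ) - 2*(j:ℤ) - 1) := by
  rw [En]
  rw [Int.two_mul_ediv_two_of_even]
  rcases Int.even_or_odd (n:ℤ) with he | ho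
  · exact he.mul_right _
  · obtain ⟨k, hk⟩ := ho
    have hev : Even ((n:ℤ) + 4*(ν:ℤ) - 2*(j:ℤ) - 1) := ⟨(k:ℤ) + 2*(ν:ℤ) - (j:ℤ), by omega⟩
    exact hev.mul_left _

lemma Erel1 (a j ν : ℕ) :
    En a j (ν+1) = En (a+1) j ν + ((a:ℤ) + (j:ℤ) - (ν:ℤ) - (ν:ℤ)) := by
  have h1 := En_even a j (ν+1)
  have h2 := En_even (a+1) j ν
  have key : 2 * En a j (ν+1) = 2 * En (a+1) j ν + 2*((a:ℤ) + (j:ℤ) - (ν:ℤ) - (ν:ℤ)) := by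
    rw [h1, h2]; push_cast; ring
  omega

lemma Erel2 (a j ν : ℕ) :
    En a j ν = En (a+1) j ν + ((j:ℤ) - (a:ℤ) - (ν:ℤ) - (ν:ℤ)) := by
  have h1 := En_even a j ν
  have h2 := En_even (a+1) j ν
  have key : 2 * En a j ν = 2 * En (a+1) j ν + 2*((j:ℤ) - (a:ℤ) - (ν:ℤ) - (ν:ℤ)) := by
    rw [h1, h2]; push_cast; ring
  omega

lemma Erel3 (a j ν : ℕ) :
    En (a+1) j ν = En (a+1) (j+1) ν + ((a:ℤ) + 1) := by
  have h1 := En_even (a+1) j ν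
  have h2 := En_even (a+1) (j+1) ν
  have key : 2 * En (a+1) j ν = 2 * En (a+1) (j+1) ν + 2*((a:ℤ) + 1) := by
    rw [h1, h2]; push_cast; ring
  omega

lemma prod_bn (n : ℕ) : ∏ t ∈ Finset.range n, bn ((t:ℤ) + 1 - (n:ℤ)) = Qn n := by
  rw [Qn, ← Finset.prod_range_reflect]
  apply Finset.prod_congr rfl
  intro t ht
  simp only [Finset.mem_range] at ht
  congr 1
  omega

noncomputable def cc (i j ν : ℕ) : Stmt15K :=
  (stmt15u ^ i)⁻¹ * (stmt15q - stmt15q⁻¹) ^ (i - ν) *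
    stmt15q ^ (((i : ℤ) - (ν : ℤ)) * ((i : ℤ) - 2 * (j : ℤ) + 3 * (ν : ℤ) - 1) / 2) *
    stmt15qbinom (i + j - ν) j *
    ∏ t ∈ Finset.range (i - ν), stmt15bqu ((ν : ℤ) - (i : ℤ) + 1 + (t : ℤ))

lemma cc_eq (n j ν : ℕ) :
    cc (ν+n) j ν = (stmt15u ^ (ν+n))⁻¹ * stmt15q ^ (En n j ν) * stmt15qbinom (n+j) j * Qn n := by
  rw [cc]
  have h1 : ν + n - ν = n := by omega
  have h2 : ν + n + j - ν = n + j := by omega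
  have h3 : ((ν+n : ℕ) : ℤ) - (ν:ℤ) = (n:ℤ) := by push_cast; ring
  have h4 : (((ν+n : ℕ) : ℤ) - (ν:ℤ)) * (((ν+n : ℕ):ℤ) - 2*(j:ℤ) + 3*(ν:ℤ) - 1) / 2 = En n j ν := by
    rw [En]; congr 1; push_cast; ring
  rw [h1, h2, h4]
  have h5 : ∀ t ∈ Finset.range n, stmt15bqu ((ν : ℤ) - ((ν+n : ℕ) : ℤ) + 1 + (t : ℤ))
      = bn ((t:ℤ) + 1 - (n:ℤ)) / (stmt15q - stmt15q⁻¹) := by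
    intro t ht
    rw [stmt15bqu, bn]
    congr 2 <;> push_cast <;> ring
  rw [Finset.prod_congr rfl h5, Finset.prod_div_distrib, Finset.prod_const, Finset.card_range, prod_bn]
  calc (stmt15u ^ (ν+n))⁻¹ * (stmt15q - stmt15q⁻¹) ^ n * stmt15q ^ En n j ν *
        stmt15qbinom (n + j) j * (Qn n / (stmt15q - stmt15q⁻¹) ^ n)
      = ((stmt15u ^ (ν+n))⁻¹ * stmt15q ^ En n j ν * stmt15qbinom (n + j) j * Qn n) *
        ((stmt15q - stmt15q⁻¹) ^ n / (stmt15q - stmt15q⁻¹) ^ n) := by ring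
    _ = (stmt15u ^ (ν+n))⁻¹ * stmt15q ^ En n j ν * stmt15qbinom (n + j) j * Qn n := by
        rw [div_self (pow_ne_zero _ hd), mul_one]

lemma qbinom_eq (n j : ℕ) :
    stmt15qbinom (n+j) j = stmt15qfact (n+j) / (stmt15qfact j * stmt15qfact n) := by
  rw [stmt15qbinom, Nat.add_sub_cancel]

lemma qbinom_self (j : ℕ) : stmt15qbinom j j = 1 := by
  have := qbinom_eq 0 j
  simp only [Nat.zero_add] at this
  rw [this, stmt15qfact]
  field_simp [qfact_ne_zero]

lemma qbinom_zero (m : ℕ) : stmt15qbinom m 0 = 1 := by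
  rw [stmt15qbinom]
  simp only [Nat.sub_zero, stmt15qfact]
  field_simp [qfact_ne_zero]

lemma En_zero (j ν : ℕ) : En 0 j ν = 0 := by simp [En]

lemma Qn_zero : Qn 0 = 1 := by simp [Qn]

lemma cc_diag (j ν : ℕ) : cc ν j ν = (stmt15u ^ ν)⁻¹ := by
  have h := cc_eq 0 j ν
  simpa [En_zero, Qn_zero, qbinom_self] using h

set_option maxHeartbeats 2000000 in
lemma core (ν n j : ℕ) :
    (if 0 < n then cc (ν+n) j (ν+1) else 0)
      + (stmt15q ^ (2*ν))⁻¹ * (if 0 < n + j then cc (ν+n) j ν else 0)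
    = (if 0 < n then cc (ν+n-1) j ν else 0)
      + (if 0 < j then (stmt15q ^ (2*(ν+n)))⁻¹ * cc (ν+n) (j-1) ν else 0) := by
  match n, j with
  | 0, 0 => simp
  | 0, (b+1) =>
    simp only [Nat.add_zero, Nat.zero_add, Nat.lt_irrefl, if_false, if_pos (Nat.succ_pos b),
      Nat.succ_sub_one, zero_add]
    rw [cc_diag, cc_diag]
  | (a+1), j =>
    have h1 := cc_eq a j (ν+1)
    rw [show (ν+1)+a = ν+(a+1) by omega] at h1
    have h2 := cc_eq (a+1) j ν
    have h3 := cc_eq a j ν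
    have e3 : ν+(a+1)-1 = ν+a := by omega
    have hu' : stmt15u ≠ 0 := hu
    have hq' : stmt15q ≠ 0 := hq
    have hd' : stmt15q - stmt15q⁻¹ ≠ 0 := hd
    simp only [if_pos (Nat.succ_pos a), e3, h1, h2, h3]
    match j with
    | 0 =>
      simp only [Nat.add_zero, Nat.lt_irrefl, if_false, add_zero]
      rw [Erel1 a 0 ν, Erel2 a 0 ν, qbinom_zero, qbinom_zero, Qn_succ, bn]
      rw [zpow_add₀ hq, zpow_add₀ hq]
      have ht : stmt15q ^ (En (a+1) 0 ν) ≠ 0 := zpow_ne_zero _ hq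
      have hQ : Qn a ≠ 0 := Qn_ne_zero a
      simp only [zpow_sub₀ hq, zpow_add₀ hq, zpow_natCast, zpow_neg, zpow_zero, zpow_one, neg_neg,
        inv_pow]
      rw [if_pos (by omega)]
      field_simp
      ring
    | (b+1) =>
      have h4 := cc_eq (a+1) b ν
      simp only [if_pos (Nat.succ_pos b), Nat.succ_sub_one, h4,
        if_pos (show 0 < a+1+(b+1) by omega)]
      rw [Erel1 a (b+1) ν, Erel2 a (b+1) ν, Erel3 a b ν, Qn_succ, bn]
      rw [zpow_add₀ hq, zpow_add₀ hq, zpow_add₀ hq]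
      rw [qbinom_eq (a+1) (b+1), qbinom_eq a (b+1), qbinom_eq (a+1) b]
      rw [show a+1+(b+1) = (a+b+1)+1 by omega, show a+(b+1) = a+b+1 by omega,
          show a+1+b = a+b+1 by omega]
      rw [show stmt15qfact ((a+b+1)+1) = stmt15qfact (a+b+1) * stmt15qnum (a+b+2) from rfl,
          show stmt15qfact (a+1) = stmt15qfact a * stmt15qnum (a+1) from rfl,
          show stmt15qfact (b+1) = stmt15qfact b * stmt15qnum (b+1) from rfl]
      rw [stmt15qnum, stmt15qnum, stmt15qnum]
      have ht : stmt15q ^ (En (a+1) (b+1) ν) ≠ 0 := zpow_ne_zero _ hq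
      have hQ : Qn a ≠ 0 := Qn_ne_zero a
      have hfa := qfact_ne_zero a
      have hfb := qfact_ne_zero b
      have hfab := qfact_ne_zero (a+b+1)
      have hna := qnum_num_ne_zero (a+1) (by omega)
      have hnb := qnum_num_ne_zero (b+1) (by omega)
      have hnab := qnum_num_ne_zero (a+b+2) (by omega)
      have h2a := qq_pow_ne_one (a+1) (by omega)
      have h2b := qq_pow_ne_one (b+1) (by omega)
      have h2ab := qq_pow_ne_one (a+b+2) (by omega)
      have h2d := qq_ne_one
      simp only [zpow_sub₀ hq, zpow_add₀ hq, zpow_natCast, zpow_neg, zpow_zero, zpow_one, neg_neg,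
        inv_pow]
      have h2a' : (stmt15q ^ (a+1))^2 - 1 ≠ 0 := by rw [sq]; exact h2a
      have h2b' : (stmt15q ^ (b+1))^2 - 1 ≠ 0 := by rw [sq]; exact h2b
      have h2ab' : (stmt15q ^ (a+b+2))^2 - 1 ≠ 0 := by rw [sq]; exact h2ab
      have h2d' : stmt15q^2 - 1 ≠ 0 := by rw [sq]; exact h2d
      field_simp
      ring

lemma core' (i j ν : ℕ) (hν : ν ≤ i) :
    (if ν < i then cc i j (ν+1) else 0)
      + (stmt15q ^ (2*ν))⁻¹ * (if i + j - ν = 0 then 0 else cc i j ν)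
    = (if ν < i then cc (i-1) j ν else 0)
      + (if j = 0 then 0 else (stmt15q ^ (2*i))⁻¹ * cc i (j-1) ν) := by
  have h := core ν (i-ν) j
  rw [show ν + (i-ν) = i from by omega] at h
  simp only [show (0 < i - ν) ↔ (ν < i) from by omega,
    show (0 < i - ν + j) ↔ ¬(i + j - ν = 0) from by omega,
    show (0 < j) ↔ ¬(j = 0) from by omega, ite_not] at h
  exact h

end S15

/-- the explicit affine `R`-matrix `R(u)` for
`L⁻_{1,a} ⊗ L⁻_{1,a}` over `U_q(ŝl₂)` commutes with the coproduct actions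
`E = e ⊗ 1 + k ⊗ e` and `K = k ⊗ k` of the Chevalley generators `e₁, k₁`
(where `e z_j = z_{j-1}`, `k z_j = q^{-2j} z_j`). -/
theorem stmt15 (R E K : Module.End Stmt15K ((ℕ × ℕ) →₀ Stmt15K))
    (hE : ∀ i j : ℕ, E (stmt15zb (i, j)) =
      (if i = 0 then 0 else stmt15zb (i - 1, j)) +
        (stmt15q ^ (2 * i))⁻¹ • (if j = 0 then 0 else stmt15zb (i, j - 1)))
    (hK : ∀ i j : ℕ, K (stmt15zb (i, j)) = (stmt15q ^ (2 * (i + j)))⁻¹ • stmt15zb (i, j))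
    (hR : ∀ i j : ℕ, R (stmt15zb (i, j)) =
      ∑ ν ∈ Finset.range (i + 1),
        ((stmt15u ^ i)⁻¹ * (stmt15q - stmt15q⁻¹) ^ (i - ν) *
            stmt15q ^ (((i : ℤ) - (ν : ℤ)) * ((i : ℤ) - 2 * (j : ℤ) + 3 * (ν : ℤ) - 1) / 2) *
            stmt15qbinom (i + j - ν) j *
            ∏ t ∈ Finset.range (i - ν), stmt15bqu ((ν : ℤ) - (i : ℤ) + 1 + (t : ℤ))) •
          stmt15zb (ν, i + j - ν)) :
    R * E = E * R ∧ R * K = K * R := by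
  classical
  have hR' : ∀ i j : ℕ, R (stmt15zb (i, j)) =
      ∑ ν ∈ Finset.range (i + 1), S15.cc i j ν • stmt15zb (ν, i + j - ν) := hR
  have hER : ∀ i j : ℕ, E (R (stmt15zb (i, j))) =
      ∑ ν ∈ Finset.range (i + 1),
        ((if ν < i then S15.cc i j (ν+1) else 0)
          + (stmt15q ^ (2*ν))⁻¹ * (if i + j - ν = 0 then 0 else S15.cc i j ν))
          • stmt15zb (ν, i + j - 1 - ν) := by
    intro i j
    rw [hR' i j, map_sum]
    simp only [map_smul, hE, smul_add]
    rw [Finset.sum_add_distrib]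
    have e1 : ∑ ν ∈ Finset.range (i+1),
        S15.cc i j ν • (if ν = 0 then (0 : (ℕ×ℕ) →₀ Stmt15K) else stmt15zb (ν-1, i+j-ν))
        = ∑ ν ∈ Finset.range (i+1),
            (if ν < i then S15.cc i j (ν+1) else 0) • stmt15zb (ν, i+j-1-ν) := by
      rw [Finset.sum_range_succ'
        (fun ν => S15.cc i j ν • (if ν = 0 then (0 : (ℕ×ℕ) →₀ Stmt15K)
          else stmt15zb (ν-1, i+j-ν)))]
      conv_rhs => rw [Finset.sum_range_succ]
      rw [if_pos (rfl : (0:ℕ) = 0), smul_zero, add_zero,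
        if_neg (Nat.lt_irrefl i), zero_smul, add_zero]
      apply Finset.sum_congr rfl
      intro ν hν
      rw [Finset.mem_range] at hν
      rw [if_neg (Nat.succ_ne_zero ν), if_pos hν, Nat.add_sub_cancel,
        show i+j-(ν+1) = i+j-1-ν from by omega]
    have e2 : ∑ ν ∈ Finset.range (i+1),
        S15.cc i j ν • ((stmt15q ^ (2*ν))⁻¹ •
          (if i+j-ν = 0 then (0 : (ℕ×ℕ) →₀ Stmt15K) else stmt15zb (ν, i+j-ν-1)))
        = ∑ ν ∈ Finset.range (i+1),
            ((stmt15q ^ (2*ν))⁻¹ * (if i + j - ν = 0 then 0 else S15.cc i j ν))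
              • stmt15zb (ν, i+j-1-ν) := by
      apply Finset.sum_congr rfl
      intro ν hν
      by_cases h : i + j - ν = 0
      · simp [h]
      · rw [if_neg h, if_neg h, smul_smul, mul_comm (S15.cc i j ν),
          show i+j-ν-1 = i+j-1-ν from by omega]
    rw [e1, e2, ← Finset.sum_add_distrib]
    apply Finset.sum_congr rfl
    intro ν hν
    rw [add_smul]
  have hRE : ∀ i j : ℕ, R (E (stmt15zb (i, j))) =
      ∑ ν ∈ Finset.range (i + 1),
        ((if ν < i then S15.cc (i-1) j ν else 0)
          + (if j = 0 then 0 else (stmt15q ^ (2*i))⁻¹ * S15.cc i (j-1) ν))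
          • stmt15zb (ν, i + j - 1 - ν) := by
    intro i j
    rw [hE i j, map_add, map_smul, apply_ite R, map_zero, hR' (i-1) j,
      apply_ite R, map_zero, hR' i (j-1)]
    have f1 : (if i = 0 then (0 : (ℕ×ℕ) →₀ Stmt15K)
          else ∑ ν ∈ Finset.range (i-1+1), S15.cc (i-1) j ν • stmt15zb (ν, i-1+j-ν))
        = ∑ ν ∈ Finset.range (i+1),
            (if ν < i then S15.cc (i-1) j ν else 0) • stmt15zb (ν, i+j-1-ν) := by
      rcases i with _ | i'
      · simp
      · rw [if_neg (Nat.succ_ne_zero i')]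
        simp only [Nat.succ_sub_one]
        conv_rhs => rw [Finset.sum_range_succ]
        rw [if_neg (Nat.lt_irrefl (i'+1)), zero_smul, add_zero]
        apply Finset.sum_congr rfl
        intro ν hν
        rw [Finset.mem_range] at hν
        rw [if_pos hν, show i'+j-ν = i'+1+j-1-ν from by omega]
    have f2 : (stmt15q ^ (2*i))⁻¹ • (if j = 0 then (0 : (ℕ×ℕ) →₀ Stmt15K)
          else ∑ ν ∈ Finset.range (i+1), S15.cc i (j-1) ν • stmt15zb (ν, i+(j-1)-ν))
        = ∑ ν ∈ Finset.range (i+1),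
            (if j = 0 then 0 else (stmt15q ^ (2*i))⁻¹ * S15.cc i (j-1) ν)
              • stmt15zb (ν, i+j-1-ν) := by
      rcases j with _ | j'
      · simp
      · rw [if_neg (Nat.succ_ne_zero j'), Finset.smul_sum]
        apply Finset.sum_congr rfl
        intro ν hν
        rw [Finset.mem_range] at hν
        rw [if_neg (Nat.succ_ne_zero j'), smul_smul, Nat.succ_sub_one,
          show i+(j'+1)-1-ν = i+j'-ν from by omega]
    rw [f1, f2, ← Finset.sum_add_distrib]
    apply Finset.sum_congr rfl
    intro ν hν
    rw [add_smul]
  constructor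
  · apply Finsupp.lhom_ext
    rintro ⟨i, j⟩ c
    have hs : Finsupp.single ((i,j) : ℕ×ℕ) c = c • stmt15zb (i,j) := by
      simp [stmt15zb]
    rw [Module.End.mul_apply, Module.End.mul_apply, hs, map_smul, map_smul, map_smul, map_smul]
    congr 1
    rw [hER i j, hRE i j]
    apply Finset.sum_congr rfl
    intro ν hν
    rw [Finset.mem_range] at hν
    rw [S15.core' i j ν (by omega)]
  · apply Finsupp.lhom_ext
    rintro ⟨i, j⟩ c
    have hs : Finsupp.single ((i,j) : ℕ×ℕ) c = c • stmt15zb (i,j) := by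
      simp [stmt15zb]
    rw [Module.End.mul_apply, Module.End.mul_apply, hs, map_smul, map_smul, map_smul, map_smul]
    congr 1
    rw [hK i j, map_smul, hR' i j, map_sum, Finset.smul_sum]
    simp only [map_smul]
    apply Finset.sum_congr rfl
    intro ν hν
    rw [Finset.mem_range] at hν
    rw [hK ν (i+j-ν), show ν + (i+j-ν) = i+j from by omega, smul_comm]
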